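/- No profitable policy-swap deviation at an AMFCE: in a finite-horizon mean field game, suppose (π, ρ) is an Adaptive Mean Field Correlated Equilibrium. Then for every family of swap maps u_t : A → A (t = 0,…,T), the deviated policy u∘π defined by (u∘π)_t(a'|s,z) = Σ_{a∈A : u_t(a)=a'} π_t(a|s,z) satisfies J(u∘π, π, ρ) ≤ J(π, π, ρ); moreover Q_t^{u∘π}(s,a,μ,z;π) ≤ Q_t^π(s,a,μ,z;π) for every t, s, a, and every mean-field flow value μ of π at time t, z ∈ Z. -/

import Mathlib

open Finset

/-- The probability simplex on a finite set `X`. -/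
abbrev ProbVec (X : Type*) [Fintype X] : Type _ :=
  {p : X → ℝ // (∀ x, 0 ≤ p x) ∧ ∑ x, p x = 1}

variable {S A Z : Type*} [Fintype S] [Fintype A] [Fintype Z] [Nonempty S] [Nonempty A] [Nonempty Z]

/-- Mean-field update `Φ(μ, π_t, z)(s') = Σ_s Σ_a μ(s) P(s'|s,a,μ) π_t(a|s,z)`. -/
noncomputable def mfStep (P : S → A → ProbVec S → ProbVec S)
    (μ : ProbVec S) (πt : S → Z → ProbVec A) (z : Z) : ProbVec S :=
  ⟨fun s' => ∑ s, ∑ a, μ.1 s * (P s a μ).1 s' * (πt s z).1 a, by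
    constructor
    · intro s'
      refine sum_nonneg fun s _ => sum_nonneg fun a _ => ?_
      exact mul_nonneg (mul_nonneg (μ.2.1 s) ((P s a μ).2.1 s')) ((πt s z).2.1 a)
    · have h1 : ∀ s a, ∑ s', μ.1 s * (P s a μ).1 s' * (πt s z).1 a
          = μ.1 s * (πt s z).1 a := by
        intro s a
        have h : ∀ s', μ.1 s * (P s a μ).1 s' * (πt s z).1 a
            = (μ.1 s * (πt s z).1 a) * (P s a μ).1 s' := fun s' => by ring
        simp only [h, ← Finset.mul_sum, (P s a μ).2.2, mul_one]
      calc ∑ s', ∑ s, ∑ a, μ.1 s * (P s a μ).1 s' * (πt s z).1 a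
          = ∑ s, ∑ a, ∑ s', μ.1 s * (P s a μ).1 s' * (πt s z).1 a := by
            rw [Finset.sum_comm]
            exact Finset.sum_congr rfl fun s _ => Finset.sum_comm
        _ = ∑ s, ∑ a, μ.1 s * (πt s z).1 a :=
            Finset.sum_congr rfl fun s _ => Finset.sum_congr rfl fun a _ => h1 s a
        _ = ∑ s, μ.1 s := by
            refine Finset.sum_congr rfl fun s _ => ?_
            rw [← Finset.mul_sum, (πt s z).2.2, mul_one]
        _ = 1 := μ.2.2⟩

/-- Mean-field flow of the policy `π` along the signal sequence `zs`. -/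
noncomputable def mfFlow (P : S → A → ProbVec S → ProbVec S) (μ0 : ProbVec S)
    (π : ℕ → S → Z → ProbVec A) (zs : ℕ → Z) : ℕ → ProbVec S
  | 0 => μ0
  | t + 1 => mfStep P (mfFlow P μ0 π zs t) (π t) (zs t)

/-- Expected discounted return-to-go `E[Σ_{i=t}^{t+n} γ^{i-t} r(s_i,a_i,μ_i)]` for the
individual policy `π` against the population policy `π'` under the correlation device `ρ`,
given `n` further steps, current time `t`, current state `s` and current mean field `μ`. -/
noncomputable def Vrem (P : S → A → ProbVec S → ProbVec S) (r : S → A → ProbVec S → ℝ) (γ : ℝ)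
    (π π' : ℕ → S → Z → ProbVec A) (ρ : ℕ → ProbVec Z) : ℕ → ℕ → S → ProbVec S → ℝ
  | 0, t, s, μ => ∑ z, (ρ t).1 z * ∑ a, (π t s z).1 a * r s a μ
  | n + 1, t, s, μ => ∑ z, (ρ t).1 z * ∑ a, (π t s z).1 a *
      (r s a μ + γ * ∑ s', (P s a μ).1 s' *
        Vrem P r γ π π' ρ n (t + 1) s' (mfStep P μ (π' t) z))

/-- Expected return `J(π, π', ρ) = E[Σ_{t=0}^T γ^t r(s_t,a_t,μ_t)]`. -/
noncomputable def expRet (P : S → A → ProbVec S → ProbVec S) (r : S → A → ProbVec S → ℝ) (γ : ℝ)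
    (μ0 : ProbVec S) (T : ℕ) (π π' : ℕ → S → Z → ProbVec A) (ρ : ℕ → ProbVec Z) : ℝ :=
  ∑ s, μ0.1 s * Vrem P r γ π π' ρ T 0 s μ0

/-- Best-response set `BR(π; ρ)`. -/
def BR (P : S → A → ProbVec S → ProbVec S) (r : S → A → ProbVec S → ℝ) (γ : ℝ)
    (μ0 : ProbVec S) (T : ℕ) (π : ℕ → S → Z → ProbVec A) (ρ : ℕ → ProbVec Z) :
    Set (ℕ → S → Z → ProbVec A) :=
  {π' | ∀ π'', expRet P r γ μ0 T π'' π ρ ≤ expRet P r γ μ0 T π' π ρ}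

/-- Action-value function `Q_t^π(s,a,μ,z;π')` by backward recursion, with `n` steps to go. -/
noncomputable def Qval (P : S → A → ProbVec S → ProbVec S) (r : S → A → ProbVec S → ℝ) (γ : ℝ)
    (π π' : ℕ → S → Z → ProbVec A) (ρ : ℕ → ProbVec Z) : ℕ → ℕ → S → A → ProbVec S → Z → ℝ
  | 0, _, s, a, μ, _ => r s a μ
  | n + 1, t, s, a, μ, z => r s a μ + γ * ∑ z', (ρ (t + 1)).1 z' * ∑ s', (P s a μ).1 s' *
      ∑ a', (π (t + 1) s' z').1 a' *
        Qval P r γ π π' ρ n (t + 1) s' a' (mfStep P μ (π' t) z) z'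

/-- Optimal action-value function `Q*_t(s,a,μ,z;π')` by backward recursion. -/
noncomputable def Qstar [Nonempty A] (P : S → A → ProbVec S → ProbVec S) (r : S → A → ProbVec S → ℝ)
    (γ : ℝ) (π' : ℕ → S → Z → ProbVec A) (ρ : ℕ → ProbVec Z) : ℕ → ℕ → S → A → ProbVec S → Z → ℝ
  | 0, _, s, a, μ, _ => r s a μ
  | n + 1, t, s, a, μ, z => r s a μ + γ * ∑ z', (ρ (t + 1)).1 z' * ∑ s', (P s a μ).1 s' *
      (Finset.univ.sup' Finset.univ_nonempty fun a' =>
        Qstar P r γ π' ρ n (t + 1) s' a' (mfStep P μ (π' t) z) z')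

/-- Swap gap `Δ_t(s, μ, u; π, ρ)` in a horizon-`T` game. -/
noncomputable def swapGap (P : S → A → ProbVec S → ProbVec S) (r : S → A → ProbVec S → ℝ) (γ : ℝ)
    (π : ℕ → S → Z → ProbVec A) (ρ : ℕ → ProbVec Z) (T t : ℕ) (s : S) (μ : ProbVec S) (u : A → A) :
    ℝ :=
  ∑ z, ∑ a, (ρ t).1 z * (π t s z).1 a *
    (Qval P r γ π π ρ (T - t) t s (u a) μ z - Qval P r γ π π ρ (T - t) t s a μ z)

/-- `(π, ρ)` is an Adaptive Mean Field Correlated Equilibrium. -/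
def IsAMFCE (P : S → A → ProbVec S → ProbVec S) (r : S → A → ProbVec S → ℝ) (γ : ℝ)
    (μ0 : ProbVec S) (T : ℕ) (π : ℕ → S → Z → ProbVec A) (ρ : ℕ → ProbVec Z) : Prop :=
  ∀ t ≤ T, ∀ zs : ℕ → Z, ∀ s : S, ∀ u : A → A,
    swapGap P r γ π ρ T t s (mfFlow P μ0 π zs t) u ≤ 0

/-- Expected return-to-go when the agent plays the fixed actions `as` while the
population follows `π` under the device `ρ`. -/
noncomputable def Ufix (P : S → A → ProbVec S → ProbVec S) (r : S → A → ProbVec S → ℝ) (γ : ℝ)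
    (π : ℕ → S → Z → ProbVec A) (ρ : ℕ → ProbVec Z) (as : ℕ → A) : ℕ → ℕ → S → ProbVec S → ℝ
  | 0, t, s, μ => r s (as t) μ
  | n + 1, t, s, μ => r s (as t) μ + γ * ∑ z, (ρ t).1 z * ∑ s', (P s (as t) μ).1 s' *
      Ufix P r γ π ρ as n (t + 1) s' (mfStep P μ (π t) z)

/-- Correlated Imitation Gap `R(a_{0:T}, π, ρ)`. -/
noncomputable def CIG (P : S → A → ProbVec S → ProbVec S) (r : S → A → ProbVec S → ℝ) (γ : ℝ)
    (μ0 : ProbVec S) (T : ℕ) (π : ℕ → S → Z → ProbVec A) (ρ : ℕ → ProbVec Z) (as : ℕ → A) : ℝ :=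
  (∑ s, μ0.1 s * Ufix P r γ π ρ as T 0 s μ0) - expRet P r γ μ0 T π π ρ

/-- Kullback–Leibler divergence on a finite set (`0 log 0 = 0`). -/
noncomputable def KLdiv {X : Type*} [Fintype X] (p q : X → ℝ) : ℝ :=
  ∑ x, p x * Real.log (p x / q x)

/-- Jensen–Shannon divergence on a finite set. -/
noncomputable def JSdiv {X : Type*} [Fintype X] (p q : X → ℝ) : ℝ :=
  (KLdiv p (fun x => (p x + q x) / 2) + KLdiv q (fun x => (p x + q x) / 2)) / 2

/-- ℓ¹ distance on a finite set. -/
noncomputable def l1dist {X : Type*} [Fintype X] (p q : X → ℝ) : ℝ :=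
  ∑ x, |p x - q x|

/-- Occupancy measure `η_t^π`: the joint law of `((z₀,…,z_t), s_t, a_t)`. -/
noncomputable def occ (P : S → A → ProbVec S → ProbVec S) (μ0 : ProbVec S)
    (π : ℕ → S → Z → ProbVec A) (ρ : ℕ → ProbVec Z) (t : ℕ) :
    ((Fin (t + 1) → Z) × S × A) → ℝ := fun x =>
  (∏ k : Fin (t + 1), (ρ k.1).1 (x.1 k)) *
    (mfFlow P μ0 π (fun k => x.1 ⟨min k t, Nat.lt_succ_of_le (min_le_right k t)⟩) t).1 x.2.1 *
    (π t x.2.1 (x.1 ⟨t, Nat.lt_succ_self t⟩)).1 x.2.2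

/-- Swapping a double sum with multipliers. -/
lemma sum_mul_swap {X Y : Type*} [Fintype X] [Fintype Y] (f : X → ℝ) (g : Y → ℝ)
    (h : X → Y → ℝ) :
    ∑ x, f x * ∑ y, g y * h x y = ∑ y, g y * ∑ x, f x * h x y := by
  simp only [Finset.mul_sum]
  rw [Finset.sum_comm]
  exact Finset.sum_congr rfl fun y _ => Finset.sum_congr rfl fun x _ => by ring

/-- The mean-field flow at time `t` only depends on signals before time `t`. -/
lemma mfFlow_congr (P : S → A → ProbVec S → ProbVec S) (μ0 : ProbVec S)
    (π : ℕ → S → Z → ProbVec A) (zs zs' : ℕ → Z) :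
    ∀ t, (∀ k < t, zs k = zs' k) → mfFlow P μ0 π zs t = mfFlow P μ0 π zs' t := by
  intro t
  induction t with
  | zero => intro _; rfl
  | succ t ih =>
    intro h
    simp only [mfFlow, ih (fun k hk => h k (Nat.lt_succ_of_lt hk)), h t (Nat.lt_succ_self t)]

/-- Regrouping a sum over the swapped policy. -/
lemma swap_regroup [DecidableEq A] (π : ℕ → S → Z → ProbVec A) (u : ℕ → A → A)
    (πu : ℕ → S → Z → ProbVec A)
    (hπu : ∀ t s z a', (πu t s z).1 a'
      = ∑ a ∈ Finset.univ.filter (fun a => u t a = a'), (π t s z).1 a)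
    (t : ℕ) (s : S) (z : Z) (f : A → ℝ) :
    ∑ a', (πu t s z).1 a' * f a' = ∑ a, (π t s z).1 a * f (u t a) := by
  calc ∑ a', (πu t s z).1 a' * f a'
      = ∑ a', ∑ a ∈ Finset.univ.filter (fun a => u t a = a'),
          (π t s z).1 a * f (u t a) := by
        refine Finset.sum_congr rfl fun a' _ => ?_
        rw [hπu, Finset.sum_mul]
        exact Finset.sum_congr rfl fun a ha => by rw [(Finset.mem_filter.mp ha).2]
    _ = ∑ a, (π t s z).1 a * f (u t a) := Finset.sum_fiberwise _ _ _

/-- `Vrem` is the `(ρ, π)`-average of `Qval`. -/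
lemma vrem_eq_qval (P : S → A → ProbVec S → ProbVec S) (r : S → A → ProbVec S → ℝ) (γ : ℝ)
    (π₁ π' : ℕ → S → Z → ProbVec A) (ρ : ℕ → ProbVec Z) :
    ∀ n t s μ, Vrem P r γ π₁ π' ρ n t s μ
      = ∑ z, (ρ t).1 z * ∑ a, (π₁ t s z).1 a * Qval P r γ π₁ π' ρ n t s a μ z := by
  intro n
  induction n with
  | zero => intro t s μ; simp [Vrem, Qval]
  | succ n ih =>
    intro t s μ
    simp only [Vrem, Qval, ih]
    refine Finset.sum_congr rfl fun z _ => ?_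
    congr 1
    refine Finset.sum_congr rfl fun a _ => ?_
    congr 2
    exact congrArg (fun x => γ * x) <| sum_mul_swap (fun s' => (P s a μ).1 s') (fun z' => (ρ (t + 1)).1 z')
      (fun s' z' => ∑ a', (π₁ (t + 1) s' z').1 a'
        * Qval P r γ π₁ π' ρ n (t + 1) s' a' (mfStep P μ (π' t) z) z')

/-- Consequence of the AMFCE condition: averaged swapped `Q` is at most averaged `Q`. -/
lemma amfce_avg_le (P : S → A → ProbVec S → ProbVec S) (r : S → A → ProbVec S → ℝ) (γ : ℝ)
    (μ0 : ProbVec S) (T : ℕ) (π : ℕ → S → Z → ProbVec A) (ρ : ℕ → ProbVec Z)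
    (hAMFCE : IsAMFCE P r γ μ0 T π ρ) (t : ℕ) (ht : t ≤ T) (zs : ℕ → Z) (s : S) (v : A → A) :
    ∑ z, (ρ t).1 z * ∑ a, (π t s z).1 a
        * Qval P r γ π π ρ (T - t) t s (v a) (mfFlow P μ0 π zs t) z
      ≤ ∑ z, (ρ t).1 z * ∑ a, (π t s z).1 a
        * Qval P r γ π π ρ (T - t) t s a (mfFlow P μ0 π zs t) z := by
  have h := hAMFCE t ht zs s v
  rw [← sub_nonpos]
  calc (∑ z, (ρ t).1 z * ∑ a, (π t s z).1 a
          * Qval P r γ π π ρ (T - t) t s (v a) (mfFlow P μ0 π zs t) z)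
        - ∑ z, (ρ t).1 z * ∑ a, (π t s z).1 a
          * Qval P r γ π π ρ (T - t) t s a (mfFlow P μ0 π zs t) z
      = swapGap P r γ π ρ T t s (mfFlow P μ0 π zs t) v := by
        simp only [swapGap, mul_sub, Finset.sum_sub_distrib, Finset.mul_sum, mul_assoc]
    _ ≤ 0 := h

/-- No profitable policy-swap deviation at an AMFCE: if `(π, ρ)` is an AMFCE, then for
every family of swap maps `u_t : A → A`, the deviated policy `u∘π` defined by
`(u∘π)_t(a'|s,z) = Σ_{a : u_t(a)=a'} π_t(a|s,z)` satisfies `J(u∘π, π, ρ) ≤ J(π, π, ρ)`;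
moreover `Q_t^{u∘π}(s,a,μ,z;π) ≤ Q_t^π(s,a,μ,z;π)` for every `t ∈ {0,…,T}`, `s`, `a`,
every mean-field flow value `μ` of `π` at time `t`, and every `z`. -/
theorem amfce_no_swap_deviation [DecidableEq A]
    (P : S → A → ProbVec S → ProbVec S) (r : S → A → ProbVec S → ℝ) (γ : ℝ)
    (hγ0 : 0 < γ) (hγ1 : γ ≤ 1) (μ0 : ProbVec S) (T : ℕ)
    (π : ℕ → S → Z → ProbVec A) (ρ : ℕ → ProbVec Z)
    (hAMFCE : IsAMFCE P r γ μ0 T π ρ)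
    (u : ℕ → A → A) (πu : ℕ → S → Z → ProbVec A)
    (hπu : ∀ t s z a', (πu t s z).1 a'
      = ∑ a ∈ Finset.univ.filter (fun a => u t a = a'), (π t s z).1 a) :
    expRet P r γ μ0 T πu π ρ ≤ expRet P r γ μ0 T π π ρ
    ∧ ∀ t ≤ T, ∀ zs : ℕ → Z, ∀ s : S, ∀ a : A, ∀ z : Z,
        Qval P r γ πu π ρ (T - t) t s a (mfFlow P μ0 π zs t) z
          ≤ Qval P r γ π π ρ (T - t) t s a (mfFlow P μ0 π zs t) z := by
  have hγ0' : (0:ℝ) ≤ γ := le_of_lt hγ0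
  -- Main induction: Q^{πu} ≤ Q^π along flow values.
  have key : ∀ n t, n = T - t → t ≤ T → ∀ zs : ℕ → Z, ∀ s a z,
      Qval P r γ πu π ρ n t s a (mfFlow P μ0 π zs t) z
        ≤ Qval P r γ π π ρ n t s a (mfFlow P μ0 π zs t) z := by
    intro n
    induction n with
    | zero => intro t _ _ zs s a z; simp [Qval]
    | succ n ih =>
      intro t hn ht zs s a z
      have htT : t < T := by omega
      have hn' : n = T - (t + 1) := by omega
      set μ := mfFlow P μ0 π zs t with hμ
      set ν := mfStep P μ (π t) z with hν
      set zs' : ℕ → Z := Function.update zs t z with hzs'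
      have hflow : ν = mfFlow P μ0 π zs' (t + 1) := by
        have h1 : mfFlow P μ0 π zs t = mfFlow P μ0 π zs' t := by
          refine mfFlow_congr P μ0 π zs zs' t fun k hk => ?_
          simp [hzs', Function.update_of_ne (Nat.ne_of_lt hk)]
        simp only [mfFlow, ← h1, hν, hμ, hzs', Function.update_self]
        rw [← hzs', ← h1]
      -- pointwise inner inequality
      have inner : ∀ z' s', ∑ a', (πu (t + 1) s' z').1 a'
            * Qval P r γ πu π ρ n (t + 1) s' a' ν z'
          ≤ ∑ a'', (π (t + 1) s' z').1 a''
            * Qval P r γ π π ρ n (t + 1) s' (u (t + 1) a'') ν z' := by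
        intro z' s'
        calc ∑ a', (πu (t + 1) s' z').1 a' * Qval P r γ πu π ρ n (t + 1) s' a' ν z'
            ≤ ∑ a', (πu (t + 1) s' z').1 a' * Qval P r γ π π ρ n (t + 1) s' a' ν z' := by
              refine Finset.sum_le_sum fun a' _ => ?_
              refine mul_le_mul_of_nonneg_left ?_ ((πu (t + 1) s' z').2.1 a')
              rw [hflow]
              exact ih (t + 1) hn' htT zs' s' a' z'
          _ = ∑ a'', (π (t + 1) s' z').1 a''
              * Qval P r γ π π ρ n (t + 1) s' (u (t + 1) a'') ν z' :=
              swap_regroup π u πu hπu (t + 1) s' z' _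
      show r s a μ + γ * _ ≤ r s a μ + γ * _
      refine add_le_add le_rfl (mul_le_mul_of_nonneg_left ?_ hγ0')
      calc ∑ z', (ρ (t + 1)).1 z' * ∑ s', (P s a μ).1 s'
              * ∑ a', (πu (t + 1) s' z').1 a' * Qval P r γ πu π ρ n (t + 1) s' a' ν z'
          ≤ ∑ z', (ρ (t + 1)).1 z' * ∑ s', (P s a μ).1 s'
              * ∑ a'', (π (t + 1) s' z').1 a''
                * Qval P r γ π π ρ n (t + 1) s' (u (t + 1) a'') ν z' := by
            refine Finset.sum_le_sum fun z' _ => ?_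
            refine mul_le_mul_of_nonneg_left ?_ ((ρ (t + 1)).2.1 z')
            refine Finset.sum_le_sum fun s' _ => ?_
            exact mul_le_mul_of_nonneg_left (inner z' s') ((P s a μ).2.1 s')
        _ = ∑ s', (P s a μ).1 s' * ∑ z', (ρ (t + 1)).1 z'
              * ∑ a'', (π (t + 1) s' z').1 a''
                * Qval P r γ π π ρ n (t + 1) s' (u (t + 1) a'') ν z' :=
            (sum_mul_swap _ _ _).symm
        _ ≤ ∑ s', (P s a μ).1 s' * ∑ z', (ρ (t + 1)).1 z'
              * ∑ a'', (π (t + 1) s' z').1 a''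
                * Qval P r γ π π ρ n (t + 1) s' a'' ν z' := by
            refine Finset.sum_le_sum fun s' _ => ?_
            refine mul_le_mul_of_nonneg_left ?_ ((P s a μ).2.1 s')
            have := amfce_avg_le P r γ μ0 T π ρ hAMFCE (t + 1) htT zs' s' (u (t + 1))
            rw [← hn', ← hflow] at this
            exact this
        _ = ∑ z', (ρ (t + 1)).1 z' * ∑ s', (P s a μ).1 s'
              * ∑ a'', (π (t + 1) s' z').1 a''
                * Qval P r γ π π ρ n (t + 1) s' a'' ν z' :=
            sum_mul_swap _ _ _
  refine ⟨?_, fun t ht zs s a z => key (T - t) t rfl ht zs s a z⟩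
  -- expected return comparison
  have zs0 : ℕ → Z := fun _ => Classical.arbitrary Z
  have hT0 : T = T - 0 := rfl
  unfold expRet
  refine Finset.sum_le_sum fun s _ => mul_le_mul_of_nonneg_left ?_ (μ0.2.1 s)
  rw [vrem_eq_qval, vrem_eq_qval]
  have hμ0 : μ0 = mfFlow P μ0 π (fun _ => Classical.arbitrary Z) 0 := rfl
  calc ∑ z, (ρ 0).1 z * ∑ a', (πu 0 s z).1 a' * Qval P r γ πu π ρ T 0 s a' μ0 z
      ≤ ∑ z, (ρ 0).1 z * ∑ a', (πu 0 s z).1 a' * Qval P r γ π π ρ T 0 s a' μ0 z := by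
        refine Finset.sum_le_sum fun z _ => ?_
        refine mul_le_mul_of_nonneg_left ?_ ((ρ 0).2.1 z)
        refine Finset.sum_le_sum fun a' _ => ?_
        refine mul_le_mul_of_nonneg_left ?_ ((πu 0 s z).2.1 a')
        rw [hμ0]
        exact key T 0 rfl (Nat.zero_le T) _ s a' z
    _ = ∑ z, (ρ 0).1 z * ∑ a, (π 0 s z).1 a * Qval P r γ π π ρ T 0 s (u 0 a) μ0 z := by
        refine Finset.sum_congr rfl fun z _ => ?_
        congr 1
        exact swap_regroup π u πu hπu 0 s z _
    _ ≤ ∑ z, (ρ 0).1 z * ∑ a, (π 0 s z).1 a * Qval P r γ π π ρ T 0 s a μ0 z := by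
        have := amfce_avg_le P r γ μ0 T π ρ hAMFCE 0 (Nat.zero_le T)
          (fun _ => Classical.arbitrary Z) s (u 0)
        exact this
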